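/- Let G be a connected graph on n ≥ 2 vertices. Then PI_w(G) ≥ n(4n − 6), with equality if and only if G is the path P_n. -/

import Mathlib

open Finset
open scoped Classical

/-- Number of vertices strictly closer to `u` than to `v`. -/
noncomputable def ncl {V : Type*} [Fintype V] (G : SimpleGraph V) (u v : V) : ℕ :=
  (Finset.univ.filter fun x => G.dist x u < G.dist x v).card

/-- Weighted vertex PI index: each edge `uv` contributes
`(deg u + deg v) * (n_u(e) + n_v(e))`; each edge is counted twice in the double sum. -/
noncomputable def PIw {V : Type*} [Fintype V] (G : SimpleGraph V) : ℝ :=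
  (∑ u, ∑ v, if G.Adj u v then
    (((G.degree u + G.degree v : ℕ) : ℝ) * ((ncl G u v + ncl G v u : ℕ) : ℝ)) else 0) / 2

namespace PIwProofAux

set_option linter.unusedSectionVars false
set_option linter.unusedVariables false
set_option linter.unnecessarySeqFocus false

variable {V : Type*} [Fintype V]

omit [Fintype V] in
lemma exists_parent {G : SimpleGraph V} {x y : V} (h : G.dist x y ≠ 0) :
    ∃ p : V, G.Adj p y ∧ G.dist x p + 1 = G.dist x y := by
  obtain ⟨w, hw⟩ := SimpleGraph.exists_walk_of_dist_ne_zero h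
  have hlen : w.length ≠ 0 := by rwa [hw]
  cases w with
  | nil => simp at hlen
  | cons hadj p =>
    obtain ⟨z, q, hq, hc⟩ := SimpleGraph.Walk.exists_cons_eq_concat hadj p
    refine ⟨z, hq, ?_⟩
    have hlen2 : q.length + 1 = G.dist x y := by
      have := congrArg SimpleGraph.Walk.length hc
      simp [SimpleGraph.Walk.length_concat] at this
      rw [← hw]; simp [this]
    have h1 : G.dist x z ≤ q.length := SimpleGraph.dist_le q
    have h2 : G.dist x y ≤ G.dist x z + 1 := by
      obtain ⟨q', hq'⟩ := (SimpleGraph.Reachable.exists_walk_length_eq_dist ⟨q⟩ :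
        ∃ p : G.Walk x z, p.length = G.dist x z)
      calc G.dist x y ≤ (q'.concat hq).length := SimpleGraph.dist_le _
        _ = G.dist x z + 1 := by rw [SimpleGraph.Walk.length_concat, hq']
    omega

omit [Fintype V] in
lemma exists_neighbor {G : SimpleGraph V} (hconn : G.Connected) {x y : V} (hxy : y ≠ x) :
    ∃ z : V, G.Adj x z := by
  have h : G.dist x y ≠ 0 := by
    rw [SimpleGraph.dist_ne_zero_iff_ne_and_reachable]
    exact ⟨hxy.symm, hconn x y⟩
  obtain ⟨w, hw⟩ := SimpleGraph.exists_walk_of_dist_ne_zero h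
  have hlen : w.length ≠ 0 := by rwa [hw]
  cases w with
  | nil => simp at hlen
  | cons hadj p => exact ⟨_, hadj⟩

omit [Fintype V] in
lemma dist_le_of_iso {W : Type*} {G : SimpleGraph V} {G' : SimpleGraph W} (e : G ≃g G')
    {u v : V} (hr : G.Reachable u v) : G'.dist (e u) (e v) ≤ G.dist u v := by
  obtain ⟨p, hp⟩ := hr.exists_walk_length_eq_dist
  calc G'.dist (e u) (e v) ≤ (p.map e.toHom).length := SimpleGraph.dist_le _
    _ = G.dist u v := by rw [SimpleGraph.Walk.length_map, hp]

omit [Fintype V] in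
lemma iso_dist {W : Type*} {G : SimpleGraph V} {G' : SimpleGraph W} (e : G ≃g G') {u v : V}
    (hr : G.Reachable u v) : G'.dist (e u) (e v) = G.dist u v := by
  refine le_antisymm (dist_le_of_iso e hr) ?_
  have hr' : G'.Reachable (e u) (e v) := ⟨(hr.some).map e.toHom⟩
  have := dist_le_of_iso e.symm hr'
  simpa using this

lemma iso_degree {W : Type*} [Fintype W] {G : SimpleGraph V} {G' : SimpleGraph W}
    (e : G ≃g G') (v : V) : G'.degree (e v) = G.degree v := by
  rw [← SimpleGraph.card_neighborSet_eq_degree, ← SimpleGraph.card_neighborSet_eq_degree]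
  exact Fintype.card_congr (e.mapNeighborSet v).symm

noncomputable def S (G : SimpleGraph V) : ℕ :=
  ∑ u, ∑ v, if G.Adj u v then (G.degree u + G.degree v) * (ncl G u v + ncl G v u) else 0

noncomputable def Fx (G : SimpleGraph V) (x : V) : ℕ :=
  ∑ u, ∑ v, if G.Adj u v ∧ G.dist x u ≠ G.dist x v then G.degree u + G.degree v else 0

noncomputable def sx (G : SimpleGraph V) (x v : V) : ℕ :=
  (univ.filter fun u => G.Adj u v ∧ G.dist x u ≠ G.dist x v).card

lemma PIw_eq_S (G : SimpleGraph V) : PIw G = (S G : ℝ) / 2 := by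
  unfold PIw S
  congr 1
  rw [Nat.cast_sum]
  refine Finset.sum_congr rfl fun u _ => ?_
  rw [Nat.cast_sum]
  refine Finset.sum_congr rfl fun v _ => ?_
  split <;> push_cast <;> ring

lemma ncl_add (G : SimpleGraph V) (u v : V) :
    ncl G u v + ncl G v u = (Finset.univ.filter fun x => G.dist x u ≠ G.dist x v).card := by
  unfold ncl
  rw [← Finset.card_union_of_disjoint]
  · congr 1
    ext x
    simp only [Finset.mem_union, Finset.mem_filter, Finset.mem_univ, true_and]
    omega
  · rw [Finset.disjoint_filter]
    intro x _ h1 h2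
    omega

lemma S_eq_sum_F (G : SimpleGraph V) : S G = ∑ x, Fx G x := by
  unfold S Fx
  have step : ∀ u v : V, (if G.Adj u v then (G.degree u + G.degree v) * (ncl G u v + ncl G v u) else 0)
      = ∑ x, if G.Adj u v ∧ G.dist x u ≠ G.dist x v then G.degree u + G.degree v else 0 := by
    intro u v
    by_cases h : G.Adj u v
    · simp only [h, if_true, true_and]
      rw [ncl_add, Finset.card_filter, Finset.mul_sum]
      refine Finset.sum_congr rfl fun x _ => ?_
      split <;> simp
    · simp [h]
  calc (∑ u, ∑ v, if G.Adj u v then (G.degree u + G.degree v) * (ncl G u v + ncl G v u) else 0)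
      = ∑ u, ∑ v, ∑ x, if G.Adj u v ∧ G.dist x u ≠ G.dist x v then G.degree u + G.degree v else 0 := by
        exact Finset.sum_congr rfl fun u _ => Finset.sum_congr rfl fun v _ => step u v
    _ = ∑ u, ∑ x, ∑ v, if G.Adj u v ∧ G.dist x u ≠ G.dist x v then G.degree u + G.degree v else 0 := by
        exact Finset.sum_congr rfl fun u _ => Finset.sum_comm
    _ = ∑ x, ∑ u, ∑ v, if G.Adj u v ∧ G.dist x u ≠ G.dist x v then G.degree u + G.degree v else 0 :=
        Finset.sum_comm

lemma Fx_rearrange (G : SimpleGraph V) (x : V) :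
    Fx G x = 2 * ∑ v, G.degree v * sx G x v := by
  unfold Fx
  have split : ∀ u v : V,
      (if G.Adj u v ∧ G.dist x u ≠ G.dist x v then G.degree u + G.degree v else 0)
      = (if G.Adj u v ∧ G.dist x u ≠ G.dist x v then G.degree u else 0)
        + (if G.Adj u v ∧ G.dist x u ≠ G.dist x v then G.degree v else 0) := by
    intro u v; split <;> simp
  rw [Finset.sum_congr rfl fun u _ => Finset.sum_congr rfl fun v _ => split u v]
  rw [Finset.sum_congr rfl fun u (_ : u ∈ univ) => Finset.sum_add_distrib, Finset.sum_add_distrib]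
  have hA : (∑ u, ∑ v, if G.Adj u v ∧ G.dist x u ≠ G.dist x v then G.degree u else 0)
      = ∑ u, G.degree u * sx G x u := by
    refine Finset.sum_congr rfl fun u _ => ?_
    rw [← Finset.sum_filter, Finset.sum_const, smul_eq_mul, mul_comm]
    congr 1
    unfold sx
    congr 1
    ext w
    simp only [Finset.mem_filter, Finset.mem_univ, true_and]
    rw [SimpleGraph.adj_comm]
    tauto
  have hB : (∑ u, ∑ v, if G.Adj u v ∧ G.dist x u ≠ G.dist x v then G.degree v else 0)
      = ∑ v, G.degree v * sx G x v := by
    rw [Finset.sum_comm]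
    refine Finset.sum_congr rfl fun v _ => ?_
    rw [← Finset.sum_filter, Finset.sum_const, smul_eq_mul, mul_comm]
    rfl
  rw [hA, hB, two_mul]

lemma nat_sq (t : ℕ) (h : 1 ≤ t) : 3*t ≤ t*t + 2 ∧ (3*t = t*t+2 → t = 1 ∨ t = 2) := by
  rcases Nat.lt_or_ge t 3 with h3 | h3
  · interval_cases t <;> omega
  · have : 3*t ≤ t*t := Nat.mul_le_mul_right t h3
    omega

lemma key (G : SimpleGraph V) (hconn : G.Connected) (hn : 2 ≤ Fintype.card V) (x : V) :
    8 * Fintype.card V ≤ 2 * (∑ v, G.degree v * sx G x v) + 12 ∧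
    (2 * (∑ v, G.degree v * sx G x v) + 12 = 8 * Fintype.card V →
      (∀ v, G.degree v = 1 ∨ G.degree v = 2) ∧
      (∑ v, G.degree v) + 2 = 2 * Fintype.card V) := by
  have hdist0 : ∀ y : V, y ≠ x → G.dist x y ≠ 0 := fun y hy => by
    rw [SimpleGraph.dist_ne_zero_iff_ne_and_reachable]
    exact ⟨fun h => hy h.symm, hconn x y⟩
  set par : V → V := fun y =>
    if h : G.dist x y ≠ 0 then Classical.choose (exists_parent h) else x with hpardef
  have hpar : ∀ y : V, y ≠ x → G.Adj (par y) y ∧ G.dist x (par y) + 1 = G.dist x y := by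
    intro y hy
    have h := hdist0 y hy
    simp only [hpardef, dif_pos h]
    exact Classical.choose_spec (exists_parent h)
  set t : V → ℕ := fun v =>
    (univ.filter fun y => y ≠ x ∧ par y = v).card + (if v = x then 0 else 1) with htdef
  have h_ts : ∀ v, t v ≤ sx G x v := by
    intro v
    set C := univ.filter fun y => y ≠ x ∧ par y = v with hC
    set Sf := univ.filter fun u => G.Adj u v ∧ G.dist x u ≠ G.dist x v with hSf
    have hCsub : C ⊆ Sf := by
      intro y hy
      simp only [hC, Finset.mem_filter, Finset.mem_univ, true_and] at hy
      obtain ⟨hyx, hpy⟩ := hy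
      obtain ⟨hadj, hdy⟩ := hpar y hyx
      rw [hpy] at hadj hdy
      simp only [hSf, Finset.mem_filter, Finset.mem_univ, true_and]
      exact ⟨hadj.symm, by omega⟩
    by_cases hv : v = x
    · subst hv
      simp only [htdef, if_pos rfl, add_zero]
      exact Finset.card_le_card hCsub
    · have hpv := hpar v hv
      have hpvC : par v ∉ C := by
        intro hmem
        simp only [hC, Finset.mem_filter, Finset.mem_univ, true_and] at hmem
        obtain ⟨hpvx, hppv⟩ := hmem
        have := (hpar (par v) hpvx).2
        rw [hppv] at this
        omega
      have hins : insert (par v) C ⊆ Sf := by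
        intro u hu
        rcases Finset.mem_insert.mp hu with rfl | hu
        · simp only [hSf, Finset.mem_filter, Finset.mem_univ, true_and]
          exact ⟨hpv.1, by omega⟩
        · exact hCsub hu
      have : (insert (par v) C).card ≤ Sf.card := Finset.card_le_card hins
      rw [Finset.card_insert_of_notMem hpvC] at this
      simp only [htdef, if_neg hv]
      exact this
  have h_s_deg : ∀ v, sx G x v ≤ G.degree v := by
    intro v
    rw [← SimpleGraph.card_neighborFinset_eq_degree]
    apply Finset.card_le_card
    intro u hu
    simp only [sx, Finset.mem_filter, Finset.mem_univ, true_and] at hu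
    rw [SimpleGraph.mem_neighborFinset]
    exact hu.1.symm
  have h_t1 : ∀ v, 1 ≤ t v := by
    intro v
    by_cases hv : v = x
    · simp only [htdef, hv, if_pos rfl, add_zero]
      obtain ⟨y, hy⟩ := Fintype.exists_ne_of_one_lt_card (by omega) x
      obtain ⟨z, hz⟩ := exists_neighbor hconn hy
      have hzx : z ≠ x := fun h => G.loopless.irrefl x (h ▸ hz)
      have hdz : G.dist x z = 1 := SimpleGraph.dist_eq_one_iff_adj.mpr hz
      have hpz : par z = x := by
        have := (hpar z hzx).2
        rw [hdz] at this
        have h0 : G.dist x (par z) = 0 := by omega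
        exact ((hconn.dist_eq_zero_iff).mp h0).symm
      refine Finset.card_pos.mpr ⟨z, ?_⟩
      simp only [Finset.mem_filter, Finset.mem_univ, true_and]
      exact ⟨hzx, hpz⟩
    · simp only [htdef, if_neg hv]
      omega
  have h_sum_t : (∑ v, t v) + 2 = 2 * Fintype.card V := by
    have hfib : (univ.filter fun y => (y : V) ≠ x).card
        = ∑ v, (univ.filter fun y => y ≠ x ∧ par y = v).card := by
      have := Finset.card_eq_sum_card_fiberwise
        (f := par) (s := univ.filter fun y => (y : V) ≠ x) (t := univ)
        (fun y _ => Finset.mem_univ _)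
      rw [this]
      refine Finset.sum_congr rfl fun v _ => ?_
      congr 1
      rw [Finset.filter_filter]
    have hcard : (univ.filter fun y => (y : V) ≠ x).card = Fintype.card V - 1 := by
      rw [Finset.filter_ne', Finset.card_erase_of_mem (Finset.mem_univ x), Finset.card_univ]
    have hind : (∑ v : V, if v = x then 0 else 1) = Fintype.card V - 1 := by
      rw [← hcard]
      rw [Finset.card_filter]
      refine Finset.sum_congr rfl fun v _ => ?_
      by_cases hv : v = x <;> simp [hv]
    simp only [htdef]
    rw [Finset.sum_add_distrib, ← hfib, hcard, hind]
    omega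
  have h_t_deg : ∀ v, t v ≤ G.degree v := fun v => le_trans (h_ts v) (h_s_deg v)
  have a1 : (∑ v, t v * t v) ≤ ∑ v, G.degree v * t v :=
    Finset.sum_le_sum fun v _ => Nat.mul_le_mul_right _ (h_t_deg v)
  have a2 : (∑ v, G.degree v * t v) ≤ ∑ v, G.degree v * sx G x v :=
    Finset.sum_le_sum fun v _ => Nat.mul_le_mul_left _ (h_ts v)
  have a3 : (∑ v, 3 * t v) ≤ ∑ v, (t v * t v + 2) :=
    Finset.sum_le_sum fun v _ => (nat_sq (t v) (h_t1 v)).1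
  have e1 : (∑ v, 3 * t v) = 3 * ∑ v, t v := by rw [Finset.mul_sum]
  have e2 : (∑ v, (t v * t v + 2)) = (∑ v, t v * t v) + 2 * Fintype.card V := by
    rw [Finset.sum_add_distrib, Finset.sum_const, Finset.card_univ, smul_eq_mul]
    ring
  constructor
  · omega
  · intro heq
    have hBA : (∑ v, t v * t v) = ∑ v, G.degree v * t v := by omega
    have h3T : (∑ v, 3 * t v) = ∑ v, (t v * t v + 2) := by omega
    have hpt1 : ∀ v ∈ univ, t v * t v = G.degree v * t v :=
      (Finset.sum_eq_sum_iff_of_le fun v _ => Nat.mul_le_mul_right _ (h_t_deg v)).mp hBA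
    have hdeg_t : ∀ v, G.degree v = t v := by
      intro v
      have := hpt1 v (Finset.mem_univ v)
      exact (Nat.eq_of_mul_eq_mul_right (h_t1 v) this.symm)
    have hpt2 : ∀ v ∈ univ, 3 * t v = t v * t v + 2 :=
      (Finset.sum_eq_sum_iff_of_le fun v _ => (nat_sq (t v) (h_t1 v)).1).mp h3T
    constructor
    · intro v
      have := (nat_sq (t v) (h_t1 v)).2 (hpt2 v (Finset.mem_univ v))
      rw [hdeg_t v]
      exact this
    · have : (∑ v, G.degree v) = ∑ v, t v := Finset.sum_congr rfl fun v _ => hdeg_t v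
      omega

lemma walk_parity {V' : Type*} {G : SimpleGraph V'} (c : G.Coloring Bool) {u v : V'}
    (w : G.Walk u v) : Even w.length ↔ c u = c v := by
  induction w with
  | nil => simp
  | @cons a b d hadj p ih =>
    have hab : c a ≠ c b := c.valid hadj
    simp only [SimpleGraph.Walk.length_cons]
    rw [Nat.even_add_one, ih]
    constructor
    · intro h
      cases hb : c b <;> cases ha : c a <;> cases hd : c d <;> simp_all
    · intro h
      cases hb : c b <;> cases ha : c a <;> cases hd : c d <;> simp_all

lemma dist_parity {V' : Type*} {G : SimpleGraph V'} (c : G.Coloring Bool) {u v : V'}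
    (hr : G.Reachable u v) : (Even (G.dist u v) ↔ c u = c v) := by
  obtain ⟨w, hw⟩ := hr.exists_walk_length_eq_dist
  rw [← hw]
  exact walk_parity c w

lemma path_dist_ne {n : ℕ} (hn : 1 ≤ n) {u v : Fin n} (hadj : (SimpleGraph.pathGraph n).Adj u v)
    (x : Fin n) : (SimpleGraph.pathGraph n).dist x u ≠ (SimpleGraph.pathGraph n).dist x v := by
  obtain ⟨m, rfl⟩ : ∃ m, n = m + 1 := ⟨n - 1, by omega⟩
  have hconn := SimpleGraph.pathGraph_connected m
  have c := SimpleGraph.pathGraph.bicoloring (m + 1)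
  have h1 := dist_parity c (hconn x u)
  have h2 := dist_parity c (hconn x v)
  have hne : c u ≠ c v := c.valid hadj
  intro h
  rw [h] at h1
  have hiff : (c x = c u) ↔ (c x = c v) := h1.symm.trans h2
  apply hne
  cases hx : c x <;> cases hu : c u <;> cases hv : c v <;> simp_all

lemma path_degree {n : ℕ} (i : Fin n) :
    (SimpleGraph.pathGraph n).degree i
      = (if i.val + 1 < n then 1 else 0) + (if 1 ≤ i.val then 1 else 0) := by
  rw [← SimpleGraph.card_neighborFinset_eq_degree]
  have hnb : (SimpleGraph.pathGraph n).neighborFinset i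
      = (univ.filter fun j : Fin n => i.val + 1 = j.val)
        ∪ (univ.filter fun j : Fin n => j.val + 1 = i.val) := by
    ext j
    simp only [SimpleGraph.mem_neighborFinset, SimpleGraph.pathGraph_adj, Finset.mem_union,
      Finset.mem_filter, Finset.mem_univ, true_and]
  rw [hnb, Finset.card_union_of_disjoint]
  · congr 1
    · by_cases h : i.val + 1 < n
      · rw [if_pos h]
        have : (univ.filter fun j : Fin n => i.val + 1 = j.val) = {⟨i.val + 1, h⟩} := by
          ext j
          simp only [Finset.mem_filter, Finset.mem_univ, true_and, Finset.mem_singleton,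
            Fin.ext_iff]
          omega
        rw [this, Finset.card_singleton]
      · rw [if_neg h]
        have : (univ.filter fun j : Fin n => i.val + 1 = j.val) = ∅ := by
          ext j
          simp only [Finset.mem_filter, Finset.mem_univ, true_and, Finset.notMem_empty,
            iff_false]
          have := j.isLt
          omega
        rw [this, Finset.card_empty]
    · by_cases h : 1 ≤ i.val
      · rw [if_pos h]
        have hlt : i.val - 1 < n := by have := i.isLt; omega
        have : (univ.filter fun j : Fin n => j.val + 1 = i.val) = {⟨i.val - 1, hlt⟩} := by
          ext j
          simp only [Finset.mem_filter, Finset.mem_univ, true_and, Finset.mem_singleton,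
            Fin.ext_iff]
          omega
        rw [this, Finset.card_singleton]
      · rw [if_neg h]
        have : (univ.filter fun j : Fin n => j.val + 1 = i.val) = ∅ := by
          ext j
          simp only [Finset.mem_filter, Finset.mem_univ, true_and, Finset.notMem_empty,
            iff_false]
          omega
        rw [this, Finset.card_empty]
  · rw [Finset.disjoint_filter]
    intro j _ h1 h2
    omega

lemma path_degree_mem {n : ℕ} (hn : 2 ≤ n) (i : Fin n) :
    (SimpleGraph.pathGraph n).degree i = 1 ∨ (SimpleGraph.pathGraph n).degree i = 2 := by
  rw [path_degree]
  have := i.isLt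
  by_cases h1 : i.val + 1 < n <;> by_cases h2 : 1 ≤ i.val <;> simp [h1, h2] <;> omega

lemma path_degree_sum {n : ℕ} (hn : 2 ≤ n) :
    (∑ i : Fin n, (SimpleGraph.pathGraph n).degree i) + 2 = 2 * n := by
  have h : (∑ i : Fin n, (SimpleGraph.pathGraph n).degree i)
      = ∑ i : Fin n, ((if i.val + 1 < n then 1 else 0) + (if 1 ≤ i.val then 1 else 0)) :=
    Finset.sum_congr rfl fun i _ => path_degree i
  rw [h, Finset.sum_add_distrib]
  have h1 : (∑ i : Fin n, if i.val + 1 < n then 1 else 0) = n - 1 := by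
    rw [Fin.sum_univ_eq_sum_range (fun k => if k + 1 < n then 1 else 0)]
    rw [← Finset.card_filter]
    have : (Finset.range n).filter (fun k => k + 1 < n) = Finset.range (n - 1) := by
      ext k
      simp only [Finset.mem_filter, Finset.mem_range]
      omega
    rw [this, Finset.card_range]
  have h2 : (∑ i : Fin n, if 1 ≤ i.val then 1 else 0) = n - 1 := by
    rw [Fin.sum_univ_eq_sum_range (fun k => if 1 ≤ k then 1 else 0)]
    rw [← Finset.card_filter]
    have : (Finset.range n).filter (fun k => 1 ≤ k) = Finset.Ico 1 n := by
      ext k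
      simp only [Finset.mem_filter, Finset.mem_range, Finset.mem_Ico]
      omega
    rw [this, Nat.card_Ico]
  rw [h1, h2]
  omega

lemma build_iso (G : SimpleGraph V) (hconn : G.Connected) (hn : 2 ≤ Fintype.card V)
    (hdeg : ∀ v, G.degree v = 1 ∨ G.degree v = 2)
    (hsum : (∑ v, G.degree v) + 2 = 2 * Fintype.card V) :
    Nonempty (G ≃g SimpleGraph.pathGraph (Fintype.card V)) := by
  have hdeg2 : ∀ v, G.degree v ≤ 2 := by intro v; rcases hdeg v with h | h <;> omega
  obtain ⟨a, ha⟩ : ∃ a : V, G.degree a = 1 := by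
    by_contra h
    push_neg at h
    have h2 : ∀ v : V, G.degree v = 2 := fun v => (hdeg v).resolve_left (h v)
    have : (∑ v, G.degree v) = 2 * Fintype.card V := by
      rw [Finset.sum_congr rfl fun v _ => h2 v, Finset.sum_const, Finset.card_univ,
        smul_eq_mul, mul_comm]
    omega
  have hdista : ∀ y : V, y ≠ a → G.dist a y ≠ 0 := fun y hy => by
    rw [SimpleGraph.dist_ne_zero_iff_ne_and_reachable]
    exact ⟨fun hh => hy hh.symm, hconn a y⟩
  have hlayer : ∀ k : ℕ, ∀ y z : V, G.dist a y = k → G.dist a z = k → y = z := by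
    intro k
    induction k using Nat.strong_induction_on with
    | _ k ih =>
      intro y z hy hz
      by_contra hyz
      rcases Nat.eq_zero_or_pos k with rfl | hk
      · apply hyz
        have h1 : a = y := hconn.dist_eq_zero_iff.mp hy
        have h2 : a = z := hconn.dist_eq_zero_iff.mp hz
        rw [← h1, ← h2]
      · obtain ⟨j, rfl⟩ : ∃ j, k = j + 1 := ⟨k - 1, by omega⟩
        have hy0 : G.dist a y ≠ 0 := by omega
        have hz0 : G.dist a z ≠ 0 := by omega
        obtain ⟨py, hpy, hpy2⟩ := exists_parent hy0
        obtain ⟨pz, hpz, hpz2⟩ := exists_parent hz0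
        have hdpy : G.dist a py = j := by omega
        have hdpz : G.dist a pz = j := by omega
        have hpe : py = pz := ih j (by omega) py pz hdpy hdpz
        subst hpe
        rcases Nat.eq_zero_or_pos j with hj | hj
        · have hpya : a = py := hconn.dist_eq_zero_iff.mp (by omega)
          subst hpya
          have hsub : ({y, z} : Finset V) ⊆ G.neighborFinset a := by
            intro w hw
            rcases Finset.mem_insert.mp hw with rfl | hw
            · exact SimpleGraph.mem_neighborFinset _ _ _ |>.mpr hpy
            · rw [Finset.mem_singleton] at hw; subst hw
              exact SimpleGraph.mem_neighborFinset _ _ _ |>.mpr hpz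
          have hcard : ({y, z} : Finset V).card = 2 := by
            rw [Finset.card_insert_of_notMem (by simpa using hyz), Finset.card_singleton]
          have := Finset.card_le_card hsub
          rw [hcard, SimpleGraph.card_neighborFinset_eq_degree, ha] at this
          omega
        · have hpy0 : G.dist a py ≠ 0 := by omega
          obtain ⟨q, hq, hq2⟩ := exists_parent hpy0
          have hqy : q ≠ y := fun h => by rw [h] at hq2; omega
          have hqz : q ≠ z := fun h => by rw [h] at hq2; omega
          have hsub : ({q, y, z} : Finset V) ⊆ G.neighborFinset py := by
            intro w hw
            rcases Finset.mem_insert.mp hw with rfl | hw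
            · exact SimpleGraph.mem_neighborFinset _ _ _ |>.mpr hq.symm
            · rcases Finset.mem_insert.mp hw with rfl | hw
              · exact SimpleGraph.mem_neighborFinset _ _ _ |>.mpr hpy
              · rw [Finset.mem_singleton] at hw; subst hw
                exact SimpleGraph.mem_neighborFinset _ _ _ |>.mpr hpz
          have hcard : ({q, y, z} : Finset V).card = 3 := by
            rw [Finset.card_insert_of_notMem (by simp [hqy, hqz]),
              Finset.card_insert_of_notMem (by simpa using hyz), Finset.card_singleton]
          have := Finset.card_le_card hsub
          rw [hcard, SimpleGraph.card_neighborFinset_eq_degree] at this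
          have := hdeg2 py
          omega
  have hlt : ∀ y : V, G.dist a y < Fintype.card V := by
    intro y
    obtain ⟨p, hp, hlen⟩ := hconn.exists_path_of_dist a y
    rw [← hlen]
    exact hp.length_lt
  set φ : V → Fin (Fintype.card V) := fun y => ⟨G.dist a y, hlt y⟩ with hφ
  have hinj : Function.Injective φ := by
    intro y z h
    simp only [hφ, Fin.mk.injEq] at h
    exact hlayer (G.dist a y) y z rfl h.symm
  have hbij : Function.Bijective φ := by
    rw [Fintype.bijective_iff_injective_and_card]
    exact ⟨hinj, by simp⟩
  have hadj_iff : ∀ y z : V,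
      (SimpleGraph.pathGraph (Fintype.card V)).Adj (φ y) (φ z) ↔ G.Adj y z := by
    intro y z
    rw [SimpleGraph.pathGraph_adj]
    simp only [hφ]
    constructor
    · rintro (h | h)
      · have hz0 : G.dist a z ≠ 0 := by omega
        obtain ⟨pz, hpz, hpz2⟩ := exists_parent hz0
        have hzy : pz = y := hlayer (G.dist a y) pz y (by omega) rfl
        exact hzy ▸ hpz
      · have hy0 : G.dist a y ≠ 0 := by omega
        obtain ⟨py, hpy, hpy2⟩ := exists_parent hy0
        have hyz2 : py = z := hlayer (G.dist a z) py z (by omega) rfl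
        exact (hyz2 ▸ hpy).symm
    · intro h
      have h1 : G.dist a z ≤ G.dist a y + 1 := by
        calc G.dist a z ≤ G.dist a y + G.dist y z := hconn.dist_triangle
          _ = G.dist a y + 1 := by rw [SimpleGraph.dist_eq_one_iff_adj.mpr h]
      have h2 : G.dist a y ≤ G.dist a z + 1 := by
        calc G.dist a y ≤ G.dist a z + G.dist z y := hconn.dist_triangle
          _ = G.dist a z + 1 := by rw [SimpleGraph.dist_eq_one_iff_adj.mpr h.symm]
      have h3 : G.dist a y ≠ G.dist a z := fun hh => h.ne (hlayer _ y z rfl hh.symm)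
      omega
  exact ⟨{ toEquiv := Equiv.ofBijective φ hbij, map_rel_iff' := fun {y z} => hadj_iff y z }⟩

lemma PIw_of_nice (G : SimpleGraph V) (hn : 2 ≤ Fintype.card V)
    (hne : ∀ x u v : V, G.Adj u v → G.dist x u ≠ G.dist x v)
    (hdeg : ∀ v, G.degree v = 1 ∨ G.degree v = 2)
    (hsum : (∑ v, G.degree v) + 2 = 2 * Fintype.card V) :
    PIw G = (Fintype.card V : ℝ) * (4 * (Fintype.card V : ℝ) - 6) := by
  have hsx : ∀ x v : V, sx G x v = G.degree v := by
    intro x v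
    unfold sx
    rw [← SimpleGraph.card_neighborFinset_eq_degree]
    congr 1
    ext u
    simp only [Finset.mem_filter, Finset.mem_univ, true_and, SimpleGraph.mem_neighborFinset]
    constructor
    · rintro ⟨h, _⟩; exact h.symm
    · intro h; exact ⟨h.symm, hne x u v h.symm⟩
  have hFx : ∀ x : V, Fx G x = 2 * ∑ v, G.degree v * G.degree v := by
    intro x
    rw [Fx_rearrange]
    congr 1
    exact Finset.sum_congr rfl fun v _ => by rw [hsx]
  have hS2 : S G = Fintype.card V * (2 * ∑ v, G.degree v * G.degree v) := by
    rw [S_eq_sum_F, Finset.sum_congr rfl fun x _ => hFx x, Finset.sum_const,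
      Finset.card_univ, smul_eq_mul]
  have hsq : (∑ v, G.degree v * G.degree v) + 2 * Fintype.card V = 3 * ∑ v, G.degree v := by
    have hp : ∀ v : V, G.degree v * G.degree v + 2 = 3 * G.degree v := by
      intro v; rcases hdeg v with h | h <;> rw [h]
    calc (∑ v, G.degree v * G.degree v) + 2 * Fintype.card V
        = ∑ v, (G.degree v * G.degree v + 2) := by
          rw [Finset.sum_add_distrib, Finset.sum_const, Finset.card_univ, smul_eq_mul]
          ring
      _ = ∑ v, 3 * G.degree v := Finset.sum_congr rfl fun v _ => hp v
      _ = 3 * ∑ v, G.degree v := by rw [Finset.mul_sum]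
  have hval : (∑ v, G.degree v * G.degree v) + 6 = 4 * Fintype.card V := by omega
  rw [PIw_eq_S, hS2]
  push_cast
  have hQ := congrArg (Nat.cast : ℕ → ℝ) hval
  push_cast at hQ
  have hQ2 : (∑ x : V, (G.degree x : ℝ) * (G.degree x : ℝ)) = 4 * (Fintype.card V : ℝ) - 6 := by
    linarith
  rw [hQ2]
  ring

end PIwProofAux

open PIwProofAux in
theorem PIw_lower_bound {V : Type*} [Fintype V] (G : SimpleGraph V)
    (hconn : G.Connected) (hn : 2 ≤ Fintype.card V) :
    PIw G ≥ (Fintype.card V : ℝ) * (4 * (Fintype.card V : ℝ) - 6) ∧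
    (PIw G = (Fintype.card V : ℝ) * (4 * (Fintype.card V : ℝ) - 6) ↔
      Nonempty (G ≃g SimpleGraph.pathGraph (Fintype.card V))) := by
  have hkey : ∀ x : V, 8 * Fintype.card V ≤ Fx G x + 12 ∧
      (Fx G x + 12 = 8 * Fintype.card V →
        (∀ v, G.degree v = 1 ∨ G.degree v = 2) ∧
        (∑ v, G.degree v) + 2 = 2 * Fintype.card V) := by
    intro x
    rw [Fx_rearrange]
    exact key G hconn hn x
  have hS : PIw G = (S G : ℝ) / 2 := PIw_eq_S G
  have hSF : S G = ∑ x, Fx G x := S_eq_sum_F G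
  have hlow : Fintype.card V * (8 * Fintype.card V) ≤ S G + 12 * Fintype.card V := by
    calc Fintype.card V * (8 * Fintype.card V) = ∑ _x : V, 8 * Fintype.card V := by
          rw [Finset.sum_const, Finset.card_univ, smul_eq_mul]
      _ ≤ ∑ x : V, (Fx G x + 12) := Finset.sum_le_sum fun x _ => (hkey x).1
      _ = (∑ x, Fx G x) + 12 * Fintype.card V := by
          rw [Finset.sum_add_distrib, Finset.sum_const, Finset.card_univ, smul_eq_mul,
            mul_comm]
      _ = S G + 12 * Fintype.card V := by rw [hSF]
  have hlowR : (Fintype.card V : ℝ) * (4 * (Fintype.card V : ℝ) - 6) ≤ PIw G := by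
    have hc : ((Fintype.card V : ℝ)) * (8 * (Fintype.card V : ℝ))
        ≤ (S G : ℝ) + 12 * (Fintype.card V : ℝ) := by exact_mod_cast hlow
    rw [hS]
    nlinarith
  refine ⟨hlowR, ?_, ?_⟩
  · -- equality → path
    intro heq
    have hnV : Nonempty V := Fintype.card_pos_iff.mp (by omega)
    have hSn : S G + 12 * Fintype.card V = Fintype.card V * (8 * Fintype.card V) := by
      have h1 : (S G : ℝ) = 2 * ((Fintype.card V : ℝ) * (4 * (Fintype.card V : ℝ) - 6)) := by
        rw [hS] at heq
        linarith
      have h2 : ((S G + 12 * Fintype.card V : ℕ) : ℝ)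
          = ((Fintype.card V * (8 * Fintype.card V) : ℕ) : ℝ) := by
        push_cast
        rw [h1]
        ring
      exact_mod_cast h2
    have hfx : ∀ x ∈ (univ : Finset V), 8 * Fintype.card V = Fx G x + 12 := by
      apply (Finset.sum_eq_sum_iff_of_le fun x _ => (hkey x).1).mp
      rw [Finset.sum_const, Finset.card_univ, smul_eq_mul, Finset.sum_add_distrib,
        Finset.sum_const, Finset.card_univ, smul_eq_mul, mul_comm (Fintype.card V) 12]
      omega
    obtain ⟨x0⟩ := hnV
    have hconc := (hkey x0).2 (hfx x0 (Finset.mem_univ x0)).symm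
    exact build_iso G hconn hn hconc.1 hconc.2
  · -- path → equality
    rintro ⟨e⟩
    have hneG : ∀ x u v : V, G.Adj u v → G.dist x u ≠ G.dist x v := by
      intro x u v h hd
      have hadj' : (SimpleGraph.pathGraph (Fintype.card V)).Adj (e u) (e v) :=
        e.map_adj_iff.mpr h
      have h1 := iso_dist e (hconn x u)
      have h2 := iso_dist e (hconn x v)
      exact path_dist_ne (by omega) hadj' (e x) (by rw [h1, h2, hd])
    have hdegG : ∀ v, G.degree v = 1 ∨ G.degree v = 2 := by
      intro v
      have h1 := iso_degree e v
      have h2 := path_degree_mem hn (e v)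
      omega
    have hsumG : (∑ v, G.degree v) + 2 = 2 * Fintype.card V := by
      have h1 : (∑ v, G.degree v)
          = ∑ w : Fin (Fintype.card V), (SimpleGraph.pathGraph (Fintype.card V)).degree w :=
        Fintype.sum_equiv e.toEquiv _ _ fun v => (iso_degree e v).symm
      rw [h1]
      exact path_degree_sum hn
    exact PIw_of_nice G hn hneG hdegG hsumG
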